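/- Let G be an edge-colored complete graph and let C be a properly edge-colored cycle in G. Then for each vertex v on C, there exists a properly edge-colored cycle C' of length at most 4 in G containing v with V(C') ⊆ V(C). -/

import Mathlib

/-- Number of edges of color `a` incident with `v` (monochromatic degree). -/
noncomputable def monDeg {V : Type*} (col : V → V → ℕ) (v : V) (a : ℕ) : ℕ :=
  {u | u ≠ v ∧ col v u = a}.ncard

/-- Color degree of a vertex: number of distinct colors on incident edges. -/
noncomputable def colorDeg {V : Type*} (col : V → V → ℕ) (v : V) : ℕ :=
  (col v '' {u | u ≠ v}).ncard

/-- Maximum monochromatic degree Δ^mon. -/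
noncomputable def maxMonDeg {V : Type*} (col : V → V → ℕ) : ℕ :=
  sSup {d | ∃ v a, d = monDeg col v a}

/-- Number of colors appearing on edges. -/
noncomputable def numColors {V : Type*} (col : V → V → ℕ) : ℕ :=
  {a | ∃ u v : V, u ≠ v ∧ col u v = a}.ncard

/-- A properly edge-colored (PC) cycle of length `m`, given by an injective
map `c : ZMod m → V`; adjacent edges get distinct colors. -/
def IsPCCycle {V : Type*} (col : V → V → ℕ) (m : ℕ) (c : ZMod m → V) : Prop :=
  3 ≤ m ∧ Function.Injective c ∧
    ∀ i : ZMod m, col (c i) (c (i + 1)) ≠ col (c (i + 1)) (c (i + 2))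

/-- `k` pairwise vertex-disjoint PC cycles. -/
def HasKDisjointPCCycles {V : Type*} (col : V → V → ℕ) (k : ℕ) : Prop :=
  ∃ (m : Fin k → ℕ) (c : ∀ j, ZMod (m j) → V),
    (∀ j, IsPCCycle col (m j) (c j)) ∧
    ∀ j j', j ≠ j' → Disjoint (Set.range (c j)) (Set.range (c j'))

/-- `k` pairwise vertex-disjoint PC cycles, each of length at most 4. -/
def HasKDisjointShortPCCycles {V : Type*} (col : V → V → ℕ) (k : ℕ) : Prop :=
  ∃ (m : Fin k → ℕ) (c : ∀ j, ZMod (m j) → V),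
    (∀ j, IsPCCycle col (m j) (c j) ∧ m j ≤ 4) ∧
    ∀ j j', j ≠ j' → Disjoint (Set.range (c j)) (Set.range (c j'))

/-- A directed cycle of length `m` in a digraph with arc relation `A`. -/
def IsDicycle {V : Type*} (A : V → V → Prop) (m : ℕ) (c : ZMod m → V) : Prop :=
  2 ≤ m ∧ Function.Injective c ∧ ∀ i : ZMod m, A (c i) (c (i + 1))

/-- `k` pairwise vertex-disjoint directed cycles. -/
def HasKDisjointDicycles {V : Type*} (A : V → V → Prop) (k : ℕ) : Prop :=
  ∃ (m : Fin k → ℕ) (c : ∀ j, ZMod (m j) → V),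
    (∀ j, IsDicycle A (m j) (c j)) ∧
    ∀ j j', j ≠ j' → Disjoint (Set.range (c j)) (Set.range (c j'))

/-- A monochromatic edge-cut: a bipartition with all crossing edges one color. -/
def HasMonochromaticCut {V : Type*} (col : V → V → ℕ) : Prop :=
  ∃ S : Set V, S.Nonempty ∧ Sᶜ.Nonempty ∧ ∃ a, ∀ x ∈ S, ∀ y ∈ Sᶜ, col x y = a

/-- A rainbow triangle: three vertices with pairwise distinct edge colors. -/
def HasRainbowTriangle {V : Type*} (col : V → V → ℕ) : Prop :=
  ∃ x y z : V, x ≠ y ∧ y ≠ z ∧ x ≠ z ∧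
    col x y ≠ col y z ∧ col y z ≠ col x z ∧ col x y ≠ col x z

/-- A Gallai partition of an edge-colored complete graph. -/
def HasGallaiPartition {V : Type*} (col : V → V → ℕ) : Prop :=
  ∃ (q : ℕ) (U : Fin q → Set V), 2 ≤ q ∧ (∀ i, (U i).Nonempty) ∧
    (∀ i j, i ≠ j → Disjoint (U i) (U j)) ∧ (⋃ i, U i) = Set.univ ∧
    (∀ i j, i ≠ j → ∃ a, ∀ x ∈ U i, ∀ y ∈ U j, col x y = a) ∧
    ∃ a b, ∀ i j, i ≠ j → ∀ x ∈ U i, ∀ y ∈ U j, col x y = a ∨ col x y = b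

lemma tri {V : Type*} (col : V → V → ℕ) (x y z : V) (hxy : x ≠ y) (hyz : y ≠ z) (hxz : x ≠ z)
    (h1 : col x y ≠ col y z) (h2 : col y z ≠ col z x) (h3 : col z x ≠ col x y) :
    IsPCCycle col 3 ![x, y, z] := by
  refine ⟨le_refl 3, ?_, ?_⟩
  · intro i j h
    fin_cases i <;> fin_cases j <;> simp_all <;> rfl
  · intro i
    fin_cases i
    · exact h1
    · exact h2
    · exact h3

lemma quad {V : Type*} (col : V → V → ℕ) (w x y z : V)
    (hwx : w ≠ x) (hwy : w ≠ y) (hwz : w ≠ z) (hxy : x ≠ y) (hxz : x ≠ z) (hyz : y ≠ z)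
    (h1 : col w x ≠ col x y) (h2 : col x y ≠ col y z) (h3 : col y z ≠ col z w)
    (h4 : col z w ≠ col w x) :
    IsPCCycle col 4 ![w, x, y, z] := by
  refine ⟨by norm_num, ?_, ?_⟩
  · intro i j h
    fin_cases i <;> fin_cases j <;> simp_all <;> rfl
  · intro i
    fin_cases i
    · exact h1
    · exact h2
    · exact h3
    · exact h4

lemma subcycle {V : Type*} (col : V → V → ℕ) {m t : ℕ} (c : ZMod m → V)
    (hC : IsPCCycle col m c) (ht2 : 2 ≤ t) (htm : t + 2 ≤ m)
    (h1 : col (c 0) (c (t : ℕ)) ≠ col (c (t : ℕ)) (c ((t + 1 : ℕ))))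
    (h2 : col (c ((m - 1 : ℕ))) (c 0) ≠ col (c 0) (c (t : ℕ))) :
    ∃ c' : ZMod (m - t + 1) → V, IsPCCycle col (m - t + 1) c' ∧ c' 0 = c 0 ∧
      Set.range c' ⊆ Set.range c := by
  obtain ⟨hm3, hinj, hpc⟩ := hC
  set n := m - t + 1 with hn
  haveI : NeZero m := ⟨by omega⟩
  haveI : NeZero n := ⟨by omega⟩
  have hn3 : 3 ≤ n := by omega
  -- index map
  set f : ℕ → ZMod m := fun j => if j = 0 then 0 else ((t - 1 + j : ℕ) : ZMod m) with hf
  set c' : ZMod n → V := fun i => c (f i.val) with hc'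
  have hcast : ∀ a b : ℕ, a < m → b < m → (a : ZMod m) = (b : ZMod m) → a = b := by
    intro a b ha hb h
    have := congrArg ZMod.val h
    rwa [ZMod.val_cast_of_lt ha, ZMod.val_cast_of_lt hb] at this
  have hflt : ∀ j, j < n → j ≠ 0 → t - 1 + j < m := by intro j hj _; omega
  have hfinj : ∀ a b, a < n → b < n → f a = f b → a = b := by
    intro a b ha hb h
    rcases eq_or_ne a 0 with rfl | ha0 <;> rcases eq_or_ne b 0 with rfl | hb0
    · rfl
    · simp only [hf, if_pos rfl, if_neg hb0] at h
      have : (0 : ℕ) = t - 1 + b := by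
        apply hcast _ _ (by omega) (hflt b hb hb0)
        simpa using h
      omega
    · simp only [hf, if_pos rfl, if_neg ha0] at h
      have : t - 1 + a = (0 : ℕ) := by
        apply hcast _ _ (hflt a ha ha0) (by omega)
        simpa using h
      omega
    · simp only [hf, if_neg ha0, if_neg hb0] at h
      have := hcast _ _ (hflt a ha ha0) (hflt b hb hb0) h
      omega
  have hv1 : ∀ i : ZMod n, (i + 1).val = (i.val + 1) % n := by
    intro i
    rw [ZMod.val_add, ZMod.val_one_eq_one_mod, Nat.mod_eq_of_lt (show 1 < n by omega)]
  have hval0 : ∀ i : ZMod n, c' i = c (f i.val) := fun _ => rfl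
  refine ⟨c', ⟨by omega, ?_, ?_⟩, by simp [hc', hf], ?_⟩
  · -- injectivity
    intro i j h
    have := hfinj i.val j.val (ZMod.val_lt i) (ZMod.val_lt j) (hinj h)
    exact ZMod.val_injective n this
  · -- PC condition
    intro i
    have hilt : i.val < n := ZMod.val_lt i
    have e1 : (i + 1).val = (i.val + 1) % n := hv1 i
    have e2 : (i + 1 + 1).val = ((i.val + 1) % n + 1) % n := by rw [hv1 (i+1), e1]
    have hadd2 : i + 2 = i + 1 + 1 := by ring
    rw [hadd2]
    rcases eq_or_ne i.val 0 with h0 | h0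
    · -- i = 0 : edges (c0, ct) (ct, c(t+1))
      have v1 : (i + 1).val = 1 := by rw [e1, h0]; exact Nat.mod_eq_of_lt (by omega)
      have v2 : (i + 1 + 1).val = 2 := by
        rw [e2, h0, Nat.mod_eq_of_lt (show 1 < n by omega)]
        exact Nat.mod_eq_of_lt (by omega)
      show col (c (f i.val)) (c (f (i+1).val)) ≠ col (c (f (i+1).val)) (c (f (i+1+1).val))
      rw [h0, v1, v2]
      simp only [hf, if_pos rfl, if_neg one_ne_zero, if_neg two_ne_zero]
      have ea : t - 1 + 1 = t := by omega
      have eb : t - 1 + 2 = t + 1 := by omega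
      rw [ea, eb]
      exact h1
    rcases eq_or_ne i.val (n - 1) with hN | hN
    · -- last edge pair: (c(m-1), c0) (c0, ct)
      have v1 : (i + 1).val = 0 := by rw [e1, hN, show n - 1 + 1 = n by omega, Nat.mod_self]
      have v2 : (i + 1 + 1).val = 1 := by
        rw [e2, hN, show n - 1 + 1 = n by omega, Nat.mod_self]
        exact Nat.mod_eq_of_lt (by omega)
      show col (c (f i.val)) (c (f (i+1).val)) ≠ col (c (f (i+1).val)) (c (f (i+1+1).val))
      rw [hN, v1, v2]
      simp only [hf, if_neg (show n - 1 ≠ 0 by omega), if_pos rfl, if_neg one_ne_zero]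
      rw [show t - 1 + (n - 1) = m - 1 by omega, show t - 1 + 1 = t by omega]
      exact h2
    rcases eq_or_ne i.val (n - 2) with hN2 | hN2
    · -- edges (c(m-2), c(m-1)) (c(m-1), c0)
      have v1 : (i + 1).val = n - 1 := by
        rw [e1, hN2, show n - 2 + 1 = n - 1 by omega]; exact Nat.mod_eq_of_lt (by omega)
      have v2 : (i + 1 + 1).val = 0 := by
        rw [e2, hN2, show n - 2 + 1 = n - 1 by omega, Nat.mod_eq_of_lt (show n - 1 < n by omega),
          show n - 1 + 1 = n by omega, Nat.mod_self]
      show col (c (f i.val)) (c (f (i+1).val)) ≠ col (c (f (i+1).val)) (c (f (i+1+1).val))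
      rw [hN2, v1, v2]
      simp only [hf, if_neg (show n - 2 ≠ 0 by omega), if_neg (show n - 1 ≠ 0 by omega),
        if_pos rfl]
      rw [show t - 1 + (n - 2) = m - 2 by omega, show t - 1 + (n - 1) = m - 1 by omega]
      have key := hpc ((m - 2 : ℕ) : ZMod m)
      have ka : ((m - 2 : ℕ) : ZMod m) + 1 = ((m - 1 : ℕ) : ZMod m) := by
        rw [show m - 1 = m - 2 + 1 by omega]; push_cast; ring
      have kb : ((m - 2 : ℕ) : ZMod m) + 2 = (0 : ZMod m) := by
        have : ((m - 2 : ℕ) : ZMod m) + 2 = ((m - 2 + 2 : ℕ) : ZMod m) := by push_cast; ring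
        rw [this, show m - 2 + 2 = m by omega, ZMod.natCast_self]
      rw [ka, kb] at key
      simpa using key
    · -- interior: 1 ≤ i.val ≤ n - 3
      have v1 : (i + 1).val = i.val + 1 := by rw [e1]; exact Nat.mod_eq_of_lt (by omega)
      have v2 : (i + 1 + 1).val = i.val + 2 := by
        rw [e2, Nat.mod_eq_of_lt (show i.val + 1 < n by omega)]
        exact Nat.mod_eq_of_lt (by omega)
      show col (c (f i.val)) (c (f (i+1).val)) ≠ col (c (f (i+1).val)) (c (f (i+1+1).val))
      rw [v1, v2]
      simp only [hf, if_neg h0, if_neg (Nat.succ_ne_zero _), if_neg (Nat.succ_ne_zero _)]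
      have key := hpc ((t - 1 + i.val : ℕ) : ZMod m)
      have ka : ((t - 1 + i.val : ℕ) : ZMod m) + 1 = ((t - 1 + (i.val + 1) : ℕ) : ZMod m) := by
        push_cast; ring
      have kb : ((t - 1 + i.val : ℕ) : ZMod m) + 2 = ((t - 1 + (i.val + 2) : ℕ) : ZMod m) := by
        push_cast; ring
      rw [ka, kb] at key
      exact key
  · -- range
    rintro x ⟨i, rfl⟩
    exact ⟨f i.val, rfl⟩

lemma aux {V : Type*} (col : V → V → ℕ) (hsymm : ∀ u v, col u v = col v u) :
    ∀ m : ℕ, ∀ c : ZMod m → V, IsPCCycle col m c →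
      ∃ (m' : ℕ) (c' : ZMod m' → V), IsPCCycle col m' c' ∧ m' ≤ 4 ∧ c 0 ∈ Set.range c' ∧
        Set.range c' ⊆ Set.range c := by
  intro m
  induction m using Nat.strong_induction_on with
  | _ m IH =>
  intro c hC
  by_cases hm4 : m ≤ 4
  · exact ⟨m, c, hC, hm4, ⟨0, rfl⟩, subset_rfl⟩
  push_neg at hm4
  obtain ⟨hm3, hinj, hpc⟩ := hC
  haveI : NeZero m := ⟨by omega⟩
  have npc : ∀ j : ℕ, col (c ↑j) (c ↑(j + 1)) ≠ col (c ↑(j + 1)) (c ↑(j + 2)) := by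
    intro j
    have := hpc (↑j)
    rw [show ((j : ℕ) : ZMod m) + 1 = ((j + 1 : ℕ) : ZMod m) by push_cast; ring,
      show ((j : ℕ) : ZMod m) + 2 = ((j + 2 : ℕ) : ZMod m) by push_cast; ring] at this
    exact this
  have hne : ∀ a b : ℕ, a < m → b < m → a ≠ b → c ↑a ≠ c ↑b := by
    intro a b ha hb hab h
    have := hinj h
    have := congrArg ZMod.val this
    rw [ZMod.val_cast_of_lt ha, ZMod.val_cast_of_lt hb] at this
    exact hab this
  have hc00 : c (0 : ZMod m) = c ((0 : ℕ) : ZMod m) := by norm_num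
  -- basic adjacent-color inequalities
  have E01 := npc 0
  have E12 := npc 1
  have E23 := npc 2
  have EL0 : col (c ((m - 1 : ℕ) : ZMod m)) (c ((0:ℕ) : ZMod m)) ≠
      col (c ((0:ℕ) : ZMod m)) (c ((1:ℕ) : ZMod m)) := by
    have := npc (m - 1)
    rw [show m - 1 + 1 = m by omega, show m - 1 + 2 = m + 1 by omega,
      show ((m : ℕ) : ZMod m) = ((0:ℕ) : ZMod m) by simp,
      show ((m + 1 : ℕ) : ZMod m) = ((1:ℕ) : ZMod m) by push_cast [ZMod.natCast_self]; ring] at this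
    exact this
  -- abbreviations (as plain terms)
  -- case 1: triangle c0 c1 c2
  by_cases k1 : col (c ((0:ℕ):ZMod m)) (c ((2:ℕ):ZMod m)) = col (c ((0:ℕ):ZMod m)) (c ((1:ℕ):ZMod m))
      ∨ col (c ((0:ℕ):ZMod m)) (c ((2:ℕ):ZMod m)) = col (c ((1:ℕ):ZMod m)) (c ((2:ℕ):ZMod m))
  swap
  · push_neg at k1
    refine ⟨3, ![c ((0:ℕ):ZMod m), c ((1:ℕ):ZMod m), c ((2:ℕ):ZMod m)],
      tri col _ _ _ (hne 0 1 (by omega) (by omega) (by omega))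
        (hne 1 2 (by omega) (by omega) (by omega)) (hne 0 2 (by omega) (by omega) (by omega))
        E01 (by rw [hsymm (c ((2:ℕ):ZMod m)) (c ((0:ℕ):ZMod m))]
                exact fun h => k1.2 h.symm) ?_, by omega, ?_, ?_⟩
    · rw [hsymm (c ((2:ℕ):ZMod m)) (c ((0:ℕ):ZMod m))]
      exact k1.1
    · exact ⟨0, by rw [hc00]; simp [Matrix.cons_val_zero]⟩
    · rintro x ⟨i, rfl⟩
      fin_cases i <;> exact Set.mem_range_self _
  -- case 2: quad c0 c1 c2 c3
  by_cases k2 : col (c ((0:ℕ):ZMod m)) (c ((3:ℕ):ZMod m)) = col (c ((0:ℕ):ZMod m)) (c ((1:ℕ):ZMod m))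
      ∨ col (c ((0:ℕ):ZMod m)) (c ((3:ℕ):ZMod m)) = col (c ((2:ℕ):ZMod m)) (c ((3:ℕ):ZMod m))
  swap
  · push_neg at k2
    refine ⟨4, ![c ((0:ℕ):ZMod m), c ((1:ℕ):ZMod m), c ((2:ℕ):ZMod m), c ((3:ℕ):ZMod m)],
      quad col _ _ _ _ (hne 0 1 (by omega) (by omega) (by omega))
        (hne 0 2 (by omega) (by omega) (by omega)) (hne 0 3 (by omega) (by omega) (by omega))
        (hne 1 2 (by omega) (by omega) (by omega)) (hne 1 3 (by omega) (by omega) (by omega))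
        (hne 2 3 (by omega) (by omega) (by omega))
        E01 E12
        (by rw [hsymm (c ((3:ℕ):ZMod m)) (c ((0:ℕ):ZMod m))]
            exact fun h => k2.2 h.symm)
        (by rw [hsymm (c ((3:ℕ):ZMod m)) (c ((0:ℕ):ZMod m))]
            exact k2.1), by omega, ?_, ?_⟩
    · exact ⟨0, by rw [hc00]; simp [Matrix.cons_val_zero]⟩
    · rintro x ⟨i, rfl⟩
      fin_cases i <;> exact Set.mem_range_self _
  -- case 3: drop c1, recurse (t = 2)
  by_cases k3 : col (c ((0:ℕ):ZMod m)) (c ((2:ℕ):ZMod m)) = col (c ((2:ℕ):ZMod m)) (c ((3:ℕ):ZMod m))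
      ∨ col (c ((0:ℕ):ZMod m)) (c ((2:ℕ):ZMod m)) = col (c ((m-1:ℕ):ZMod m)) (c ((0:ℕ):ZMod m))
  swap
  · push_neg at k3
    obtain ⟨c', hC', h0', hsub⟩ := subcycle col (t := 2) c ⟨hm3, hinj, hpc⟩ (by omega) (by omega)
      (by rw [hc00]; exact k3.1) (by rw [hc00]; exact fun h => k3.2 h.symm)
    obtain ⟨m'', c'', hP, hle, hmem, hsub'⟩ := IH (m - 2 + 1) (by omega) c' hC'
    exact ⟨m'', c'', hP, hle, by rw [h0'] at hmem; exact hmem, hsub'.trans hsub⟩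
  -- case 4: drop c1 c2, recurse (t = 3)
  by_cases k4 : col (c ((0:ℕ):ZMod m)) (c ((3:ℕ):ZMod m)) = col (c ((3:ℕ):ZMod m)) (c ((4:ℕ):ZMod m))
      ∨ col (c ((0:ℕ):ZMod m)) (c ((3:ℕ):ZMod m)) = col (c ((m-1:ℕ):ZMod m)) (c ((0:ℕ):ZMod m))
  swap
  · push_neg at k4
    obtain ⟨c', hC', h0', hsub⟩ := subcycle col (t := 3) c ⟨hm3, hinj, hpc⟩ (by omega) (by omega)
      (by rw [hc00]; exact k4.1) (by rw [hc00]; exact fun h => k4.2 h.symm)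
    obtain ⟨m'', c'', hP, hle, hmem, hsub'⟩ := IH (m - 3 + 1) (by omega) c' hC'
    exact ⟨m'', c'', hP, hle, by rw [h0'] at hmem; exact hmem, hsub'.trans hsub⟩
  -- case 5: triangle c0 c2 c3
  by_cases k5 : col (c ((0:ℕ):ZMod m)) (c ((2:ℕ):ZMod m)) = col (c ((2:ℕ):ZMod m)) (c ((3:ℕ):ZMod m))
      ∨ col (c ((2:ℕ):ZMod m)) (c ((3:ℕ):ZMod m)) = col (c ((0:ℕ):ZMod m)) (c ((3:ℕ):ZMod m))
      ∨ col (c ((0:ℕ):ZMod m)) (c ((3:ℕ):ZMod m)) = col (c ((0:ℕ):ZMod m)) (c ((2:ℕ):ZMod m))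
  swap
  · push_neg at k5
    refine ⟨3, ![c ((0:ℕ):ZMod m), c ((2:ℕ):ZMod m), c ((3:ℕ):ZMod m)],
      tri col _ _ _ (hne 0 2 (by omega) (by omega) (by omega))
        (hne 2 3 (by omega) (by omega) (by omega)) (hne 0 3 (by omega) (by omega) (by omega))
        k5.1
        (by rw [hsymm (c ((3:ℕ):ZMod m)) (c ((0:ℕ):ZMod m))]
            exact k5.2.1)
        (by rw [hsymm (c ((3:ℕ):ZMod m)) (c ((0:ℕ):ZMod m))]
            exact k5.2.2), by omega, ?_, ?_⟩
    · exact ⟨0, by rw [hc00]; simp [Matrix.cons_val_zero]⟩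
    · rintro x ⟨i, rfl⟩
      fin_cases i <;> exact Set.mem_range_self _
  -- contradiction
  exfalso
  have E01' : col (c ((0:ℕ):ZMod m)) (c ((1:ℕ):ZMod m)) ≠ col (c ((1:ℕ):ZMod m)) (c ((2:ℕ):ZMod m)) := E01
  have E12' : col (c ((1:ℕ):ZMod m)) (c ((2:ℕ):ZMod m)) ≠ col (c ((2:ℕ):ZMod m)) (c ((3:ℕ):ZMod m)) := E12
  have E23' : col (c ((2:ℕ):ZMod m)) (c ((3:ℕ):ZMod m)) ≠ col (c ((3:ℕ):ZMod m)) (c ((4:ℕ):ZMod m)) := E23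
  rcases k1 with k1 | k1 <;> rcases k2 with k2 | k2 <;> rcases k3 with k3 | k3 <;>
    rcases k4 with k4 | k4 <;> rcases k5 with k5 | k5 | k5 <;> omega

/-- Every vertex on a PC cycle of a colored complete graph lies on a PC cycle
of length at most 4 whose vertices are among those of the original cycle. -/
theorem stmt0 {V : Type*} [Fintype V] (col : V → V → ℕ)
    (hsymm : ∀ u v, col u v = col v u)
    (m : ℕ) (c : ZMod m → V) (hC : IsPCCycle col m c)
    (v : V) (hv : v ∈ Set.range c) :
    ∃ (m' : ℕ) (c' : ZMod m' → V), IsPCCycle col m' c' ∧ m' ≤ 4 ∧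
      v ∈ Set.range c' ∧ Set.range c' ⊆ Set.range c := by
  obtain ⟨k, hk⟩ := hv
  set c1 : ZMod m → V := fun i => c (i + k) with hc1
  have hC1 : IsPCCycle col m c1 := by
    obtain ⟨hm3, hinj, hpc⟩ := hC
    refine ⟨hm3, fun i j h => ?_, fun i => ?_⟩
    · have := hinj h
      exact add_right_cancel this
    · show col (c (i + k)) (c (i + 1 + k)) ≠ col (c (i + 1 + k)) (c (i + 2 + k))
      rw [show i + 1 + k = i + k + 1 by ring, show i + 2 + k = i + k + 2 by ring]
      exact hpc (i + k)
  have hrange : Set.range c1 ⊆ Set.range c := by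
    rintro x ⟨i, rfl⟩
    exact ⟨i + k, rfl⟩
  obtain ⟨m', c', hP, hle, hmem, hsub⟩ := aux col hsymm m c1 hC1
  have : c1 0 = v := by
    show c (0 + k) = v
    rw [zero_add, hk]
  exact ⟨m', c', hP, hle, this ▸ hmem, hsub.trans hrange⟩
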